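/- Let 0 ≤ α ≤ 2, let g : ℝ → ℝ be convex and C², and let θ ∈ S(ℝ²). Then the pointwise inequality Λ^α(g(θ))(x) ≤ g'(θ(x)) · Λ^α θ(x) holds for all x ∈ ℝ². In particular, for 0 < α < 2 and g(t) = t², one has Λ^α(θ²)(x) ≤ 2θ(x) Λ^α θ(x). -/

import Mathlib

open MeasureTheory Real Set
open scoped ENNReal FourierTransform

noncomputable section

abbrev E2 := EuclideanSpace ℝ (Fin 2)

/-- The fractional Laplacian `Λ^α`, `0 < α < 2`, in its absolutely convergent
second-difference form (with normalizing constant `Cα > 0`). -/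
def fracLap (α Cα : ℝ) (f : E2 → ℝ) (x : E2) : ℝ :=
  -(Cα / 2) * ∫ y : E2, (f (x + y) + f (x - y) - 2 * f x) / ‖y‖ ^ (2 + α)


/-- Tangent line lies below a convex differentiable function. -/
lemma tangent_le {g : ℝ → ℝ} (hgc : ConvexOn ℝ Set.univ g)
    (hd : ∀ t, DifferentiableAt ℝ g t) (a c : ℝ) :
    deriv g c * (a - c) ≤ g a - g c := by
  rcases lt_trichotomy c a with h | h | h
  · have := hgc.deriv_le_slope (mem_univ c) (mem_univ a) h (hd c)
    rw [slope_def_field] at this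
    have h' : 0 < a - c := by linarith
    calc deriv g c * (a - c) ≤ (g a - g c) / (a - c) * (a - c) :=
          mul_le_mul_of_nonneg_right this h'.le
      _ = g a - g c := by field_simp
  · simp [h]
  · have := hgc.slope_le_deriv (mem_univ a) (mem_univ c) h (hd c)
    rw [slope_def_field] at this
    have h' : 0 < c - a := by linarith
    have h2 : (g c - g a) / (c - a) ≤ deriv g c := this
    have h3 : g c - g a ≤ deriv g c * (c - a) := by
      calc g c - g a = (g c - g a) / (c - a) * (c - a) := by field_simp
        _ ≤ deriv g c * (c - a) := mul_le_mul_of_nonneg_right h2 h'.le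
    nlinarith

/-- Second-order Taylor estimate on an interval. -/
lemma taylor_bound {g : ℝ → ℝ} (hg : ContDiff ℝ 2 g) {M K : ℝ}
    (hK : ∀ t ∈ Icc (-M) M, |deriv (deriv g) t| ≤ K)
    {a c : ℝ} (ha : a ∈ Icc (-M) M) (hc : c ∈ Icc (-M) M) :
    |g a - g c - deriv g c * (a - c)| ≤ K * (a - c) ^ 2 := by
  have hdg : Differentiable ℝ g := hg.differentiable (by norm_num)
  have hdg1 : ContDiff ℝ 1 (deriv g) := by
    have := (contDiff_succ_iff_deriv (n := 1)).mp hg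
    exact this.2.2
  have hddg : Differentiable ℝ (deriv g) := hdg1.differentiable one_ne_zero
  -- Lipschitz estimate for deriv g on Icc
  have hlip : ∀ u ∈ Icc (-M) M, |deriv g u - deriv g c| ≤ K * |u - c| := by
    intro u hu
    have := Convex.norm_image_sub_le_of_norm_hasDerivWithin_le
      (f := deriv g) (f' := deriv (deriv g)) (s := Icc (-M) M) (C := K)
      (fun t ht => (hddg t).hasDerivAt.hasDerivWithinAt)
      (fun t ht => by simpa using hK t ht) (convex_Icc _ _) hc hu
    simpa [Real.norm_eq_abs] using this
  -- apply MVT to ψ u = g u - deriv g c * u on uIcc c a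
  have hsub : uIcc c a ⊆ Icc (-M) M := (ordConnected_Icc).uIcc_subset hc ha
  have key := Convex.norm_image_sub_le_of_norm_hasDerivWithin_le
    (f := fun u => g u - deriv g c * u) (f' := fun u => deriv g u - deriv g c)
    (s := uIcc c a) (C := K * |a - c|)
    (fun t ht => by
      convert (((hdg t).hasDerivAt.sub ((hasDerivAt_id t).const_mul (deriv g c))).hasDerivWithinAt
        (s := uIcc c a)) using 1 <;> first | rfl | simp)
    (fun t ht => by
      have h1 := hlip t (hsub ht)
      have h2 : |t - c| ≤ |a - c| := by
        rcases le_total c a with h | h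
        · rw [uIcc_of_le h] at ht
          rw [abs_of_nonneg (by linarith [ht.1]), abs_of_nonneg (by linarith)]
          linarith [ht.2]
        · rw [uIcc_of_ge h] at ht
          rw [abs_of_nonpos (by linarith [ht.2]), abs_of_nonpos (by linarith)]
          linarith [ht.1]
      calc ‖deriv g t - deriv g c‖ ≤ K * |t - c| := by simpa [Real.norm_eq_abs] using h1
        _ ≤ K * |a - c| := by
            apply mul_le_mul_of_nonneg_left h2
            have := hK c hc
            exact le_trans (abs_nonneg _) this)
    (convex_uIcc _ _) left_mem_uIcc right_mem_uIcc
  have : |g a - deriv g c * a - (g c - deriv g c * c)| ≤ K * |a - c| * |a - c| := by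
    simpa [Real.norm_eq_abs] using key
  calc |g a - g c - deriv g c * (a - c)|
      = |g a - deriv g c * a - (g c - deriv g c * c)| := by ring_nf
    _ ≤ K * |a - c| * |a - c| := this
    _ = K * (a - c) ^ 2 := by rw [mul_assoc, ← abs_mul, ← sq, abs_of_nonneg (sq_nonneg _)]


/-- Second-difference bound from a Lipschitz bound on the derivative. -/
lemma sd_bound {E : Type*} [NormedAddCommGroup E] [NormedSpace ℝ E]
    {f : E → ℝ} (hd : Differentiable ℝ f) {L : ℝ} (hL0 : 0 ≤ L)
    (hL : ∀ z w, ‖fderiv ℝ f z - fderiv ℝ f w‖ ≤ L * ‖z - w‖) (x y : E) :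
    |f (x + y) + f (x - y) - 2 * f x| ≤ 2 * L * ‖y‖ ^ 2 := by
  set φ := fderiv ℝ f x with hφ
  have key : ∀ w : E, ‖w‖ ≤ ‖y‖ → ‖f (x + w) - f x - φ w‖ ≤ L * ‖y‖ * ‖y‖ := by
    intro w hw
    have h := Convex.norm_image_sub_le_of_norm_hasFDerivWithin_le'
      (f := f) (f' := fun z => fderiv ℝ f z) (φ := φ) (s := Metric.closedBall x ‖y‖)
      (C := L * ‖y‖) (x := x) (y := x + w)
      (fun z hz => (hd z).hasFDerivAt.hasFDerivWithinAt)
      (fun z hz => by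
        calc ‖fderiv ℝ f z - φ‖ ≤ L * ‖z - x‖ := hL z x
          _ ≤ L * ‖y‖ := by
              apply mul_le_mul_of_nonneg_left _ hL0
              simpa [dist_eq_norm] using Metric.mem_closedBall.mp hz)
      (convex_closedBall _ _)
      (Metric.mem_closedBall_self (norm_nonneg _))
      (by simp [Metric.mem_closedBall, dist_eq_norm]; simpa using hw)
    calc ‖f (x + w) - f x - φ w‖ = ‖f (x + w) - f x - φ (x + w - x)‖ := by
          rw [add_sub_cancel_left]
      _ ≤ L * ‖y‖ * ‖x + w - x‖ := h
      _ ≤ L * ‖y‖ * ‖y‖ := by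
          rw [add_sub_cancel_left]
          exact mul_le_mul_of_nonneg_left hw (by positivity)
  have h1 := key y le_rfl
  have h2 := key (-y) (by simp)
  have h2' : ‖f (x - y) - f x + φ y‖ ≤ L * ‖y‖ * ‖y‖ := by
    simpa [sub_eq_add_neg, map_neg] using h2
  have : |f (x + y) + f (x - y) - 2 * f x|
      = |(f (x + y) - f x - φ y) + (f (x - y) - f x + φ y)| := by ring_nf
  rw [this]
  calc |(f (x + y) - f x - φ y) + (f (x - y) - f x + φ y)|
      ≤ |f (x + y) - f x - φ y| + |f (x - y) - f x + φ y| := abs_add_le _ _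
    _ ≤ L * ‖y‖ * ‖y‖ + L * ‖y‖ * ‖y‖ := by
        have := h1; have := h2'
        simp only [Real.norm_eq_abs] at *
        linarith
    _ = 2 * L * ‖y‖ ^ 2 := by ring


/-- `|t|^(-β)` is integrable on `[-1,1]` for `0 ≤ β < 1`. -/
lemma int1d {β : ℝ} (hβ : β < 1) :
    IntegrableOn (fun t : ℝ => |t| ^ (-β)) (Icc (-1 : ℝ) 1) := by
  have h1 : IntervalIntegrable (fun t : ℝ => t ^ (-β)) volume 0 1 :=
    intervalIntegral.intervalIntegrable_rpow' (by linarith)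
  have hpos : IntegrableOn (fun t : ℝ => |t| ^ (-β)) (Icc (0 : ℝ) 1) := by
    have h2 : IntegrableOn (fun t : ℝ => t ^ (-β)) (Ioc (0 : ℝ) 1) := by
      simpa [intervalIntegrable_iff, uIoc_of_le (zero_le_one (α := ℝ))] using h1
    have h3 : IntegrableOn (fun t : ℝ => t ^ (-β)) (Icc (0 : ℝ) 1) :=
      (integrableOn_Icc_iff_integrableOn_Ioc).mpr h2
    exact h3.congr_fun (fun t ht => by rw [abs_of_nonneg ht.1]) measurableSet_Icc
  have hneg : IntegrableOn (fun t : ℝ => |t| ^ (-β)) (Icc (-1 : ℝ) 0) := by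
    have h1' : IntervalIntegrable (fun t : ℝ => (-t) ^ (-β)) volume 0 (-1) := by
      simpa using (IntervalIntegrable.iff_comp_neg (by simp)).mp h1
    have h2 : IntegrableOn (fun t : ℝ => (-t) ^ (-β)) (Ioc (-1 : ℝ) 0) := by
      have := h1'.symm
      rw [intervalIntegrable_iff, uIoc_of_le (by norm_num : (-1:ℝ) ≤ 0)] at this
      exact this
    have h3 : IntegrableOn (fun t : ℝ => (-t) ^ (-β)) (Icc (-1 : ℝ) 0) :=
      (integrableOn_Icc_iff_integrableOn_Ioc).mpr h2
    exact h3.congr_fun (fun t ht => by rw [abs_of_nonpos ht.2]) measurableSet_Icc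
  have : Icc (-1 : ℝ) 1 = Icc (-1 : ℝ) 0 ∪ Icc (0 : ℝ) 1 := by
    rw [Icc_union_Icc_eq_Icc] <;> norm_num
  rw [this]
  exact hneg.union hpos

/-- The product weight is integrable on `E2`. -/
lemma intProd {β : ℝ} (hβ : β < 1) :
    Integrable (fun y : E2 =>
      (Icc (-1:ℝ) 1).indicator (fun t => |t| ^ (-β)) (y 0) *
      (Icc (-1:ℝ) 1).indicator (fun t => |t| ^ (-β)) (y 1)) := by
  set F : ℝ → ℝ := (Icc (-1:ℝ) 1).indicator (fun t => |t| ^ (-β)) with hF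
  have hFint : Integrable F := by
    rw [hF, integrable_indicator_iff measurableSet_Icc]
    exact int1d hβ
  have hpi : Integrable (fun v : Fin 2 → ℝ => ∏ i, F (v i)) :=
    Integrable.fintype_prod (f := fun _ : Fin 2 => F) (fun _ => hFint)
  have hpi2 : Integrable (fun v : Fin 2 → ℝ => F (v 0) * F (v 1)) := by
    simpa [Fin.prod_univ_two] using hpi
  have := (PiLp.volume_preserving_ofLp (Fin 2)).integrable_comp
    (g := fun v : Fin 2 → ℝ => F (v 0) * F (v 1)) hpi2.aestronglyMeasurable
  exact this.mpr hpi2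

lemma coord_null (i : Fin 2) : volume {y : E2 | y i = 0} = 0 := by
  have : {y : E2 | y i = 0} = (LinearMap.ker (EuclideanSpace.projₗ (𝕜 := ℝ) (ι := Fin 2) i) : Set E2) := by
    ext y; simp [LinearMap.mem_ker]
  rw [this]
  apply Measure.addHaar_submodule
  intro h
  have h0 : EuclideanSpace.single (𝕜 := ℝ) i (1:ℝ) ∈
      LinearMap.ker (EuclideanSpace.projₗ (𝕜 := ℝ) (ι := Fin 2) i) := h ▸ Submodule.mem_top
  simp [LinearMap.mem_ker] at h0

lemma coord_abs_le_norm (y : E2) (i : Fin 2) : |y i| ≤ ‖y‖ := by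
  rw [EuclideanSpace.norm_eq]
  rw [← Real.sqrt_sq_eq_abs]
  apply Real.sqrt_le_sqrt
  rw [Fin.sum_univ_two]
  fin_cases i <;> simp [sq_abs] <;> positivity

lemma rpow_two_eq (x : ℝ) : x ^ (2:ℝ) = x ^ (2:ℕ) := by
  rw [show ((2:ℝ)) = ((2:ℕ):ℝ) by norm_num, Real.rpow_natCast]

lemma norm_sq_eq (y : E2) : ‖y‖ ^ (2:ℝ) = (y 0) ^ 2 + (y 1) ^ 2 := by
  rw [rpow_two_eq, EuclideanSpace.norm_eq, Real.sq_sqrt (by positivity)]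
  simp [Fin.sum_univ_two, sq_abs]

lemma norm_sq_ge (y : E2) : 2 * |y 0| * |y 1| ≤ ‖y‖ ^ (2:ℝ) := by
  rw [norm_sq_eq]
  nlinarith [sq_nonneg (|y 0| - |y 1|), sq_abs (y 0), sq_abs (y 1)]

lemma integrable_kernel {α : ℝ} (hα : 0 < α) (hα2 : α < 2) (f : E2 → ℝ) (hf : Continuous f)
    (x : E2) (A B : ℝ)
    (hA : ∀ y : E2, |f (x + y) + f (x - y) - 2 * f x| ≤ A)
    (hB : ∀ y : E2, |f (x + y) + f (x - y) - 2 * f x| ≤ B * ‖y‖ ^ (2:ℝ)) :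
    Integrable (fun y : E2 => (f (x + y) + f (x - y) - 2 * f x) / ‖y‖ ^ (2 + α)) := by
  set num : E2 → ℝ := fun y => f (x + y) + f (x - y) - 2 * f x with hnum
  set k : E2 → ℝ := fun y => num y / ‖y‖ ^ (2 + α) with hk
  have hA0 : 0 ≤ A := le_trans (abs_nonneg _) (hA 0)
  have hB0 : 0 ≤ B := by
    have h := hB (EuclideanSpace.single (0 : Fin 2) (1:ℝ))
    rw [EuclideanSpace.norm_single] at h
    simpa using le_trans (abs_nonneg _) h
  have hnumc : Continuous num := by
    apply Continuous.sub
    · exact (hf.comp (continuous_const.add continuous_id)).add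
        (hf.comp (continuous_const.sub continuous_id))
    · exact continuous_const
  have hden : Continuous (fun y : E2 => ‖y‖ ^ (2 + α)) := by
    apply Continuous.rpow_const continuous_norm
    intro y; right; positivity
  have hmeas : Measurable k := hnumc.measurable.div hden.measurable
  set β := α / 2 with hβdef
  have hβ0 : 0 < β := by positivity
  have hβ1 : β < 1 := by rw [hβdef]; linarith
  -- integrability near zero
  have hball : IntegrableOn k (Metric.ball (0:E2) 1) := by
    apply Integrable.mono' (((intProd hβ1).const_mul (B * 2 ^ (-β))).integrableOn)
      hmeas.aestronglyMeasurable.restrict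
    have h0 : ∀ᵐ (y : E2), y 0 ≠ 0 := by rw [ae_iff]; simpa using coord_null 0
    have h1 : ∀ᵐ (y : E2), y 1 ≠ 0 := by rw [ae_iff]; simpa using coord_null 1
    filter_upwards [ae_restrict_of_ae h0, ae_restrict_of_ae h1,
      self_mem_ae_restrict measurableSet_ball] with y hy0 hy1 hyb
    have hyb' : ‖y‖ < 1 := by simpa [dist_eq_norm] using hyb
    have hy : 0 < ‖y‖ := by
      rw [norm_pos_iff]
      intro h; exact hy0 (by rw [h]; rfl)
    have hprod : 0 < 2 * |y 0| * |y 1| := by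
      have := abs_pos.mpr hy0; have := abs_pos.mpr hy1; positivity
    have step1 : ‖k y‖ ≤ B * ‖y‖ ^ (-α) := by
      rw [hk, Real.norm_eq_abs, abs_div, abs_of_nonneg (Real.rpow_nonneg (norm_nonneg y) _)]
      calc |num y| / ‖y‖ ^ (2 + α) ≤ (B * ‖y‖ ^ (2:ℝ)) / ‖y‖ ^ (2 + α) := by
            exact div_le_div_of_nonneg_right (hB y) (Real.rpow_pos_of_pos hy _).le
        _ = B * (‖y‖ ^ (2:ℝ) / ‖y‖ ^ (2 + α)) := by rw [mul_div_assoc]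
        _ = B * ‖y‖ ^ (-α) := by
            rw [← Real.rpow_sub hy]
            norm_num
    have step2 : ‖y‖ ^ (-α) ≤ 2 ^ (-β) * (|y 0| ^ (-β) * |y 1| ^ (-β)) := by
      have e1 : ‖y‖ ^ (-α) = (‖y‖ ^ (2:ℝ)) ^ (-β) := by
        rw [← Real.rpow_mul (norm_nonneg y)]
        congr 1
        rw [hβdef]; ring
      have e2 : ((2 * |y 0| * |y 1|) ^ (-β) : ℝ) = 2 ^ (-β) * (|y 0| ^ (-β) * |y 1| ^ (-β)) := by
        rw [Real.mul_rpow (by positivity) (abs_nonneg _), Real.mul_rpow (by norm_num) (abs_nonneg _)]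
        ring
      rw [e1, ← e2]
      rw [Real.rpow_neg (by positivity), Real.rpow_neg (by positivity)]
      apply inv_anti₀ (Real.rpow_pos_of_pos hprod _)
      exact Real.rpow_le_rpow hprod.le (norm_sq_ge y) hβ0.le
    have hind0 : (Icc (-1:ℝ) 1).indicator (fun t => |t| ^ (-β)) (y 0) = |y 0| ^ (-β) := by
      apply indicator_of_mem
      constructor <;> [linarith [abs_le.mp (le_of_lt (lt_of_le_of_lt (coord_abs_le_norm y 0) hyb'))];
        linarith [abs_le.mp (le_of_lt (lt_of_le_of_lt (coord_abs_le_norm y 0) hyb'))]]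
    have hind1 : (Icc (-1:ℝ) 1).indicator (fun t => |t| ^ (-β)) (y 1) = |y 1| ^ (-β) := by
      apply indicator_of_mem
      constructor <;> [linarith [abs_le.mp (le_of_lt (lt_of_le_of_lt (coord_abs_le_norm y 1) hyb'))];
        linarith [abs_le.mp (le_of_lt (lt_of_le_of_lt (coord_abs_le_norm y 1) hyb'))]]
    calc ‖k y‖ ≤ B * ‖y‖ ^ (-α) := step1
      _ ≤ B * (2 ^ (-β) * (|y 0| ^ (-β) * |y 1| ^ (-β))) :=
          mul_le_mul_of_nonneg_left step2 hB0
      _ = B * 2 ^ (-β) * ((Icc (-1:ℝ) 1).indicator (fun t => |t| ^ (-β)) (y 0) *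
            (Icc (-1:ℝ) 1).indicator (fun t => |t| ^ (-β)) (y 1)) := by
          rw [hind0, hind1]; ring
  -- integrability away from zero
  have hcompl : IntegrableOn k (Metric.ball (0:E2) 1)ᶜ := by
    have hfin : ((Module.finrank ℝ E2 : ℝ)) < 2 + α := by
      simp only [finrank_euclideanSpace_fin]
      norm_num; linarith
    apply Integrable.mono'
      (((integrable_one_add_norm (μ := (volume : Measure E2)) hfin).const_mul
        (A * 2 ^ (2+α))).integrableOn)
      hmeas.aestronglyMeasurable.restrict
    filter_upwards [self_mem_ae_restrict measurableSet_ball.compl] with y hy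
    have hy1 : 1 ≤ ‖y‖ := by
      simp only [mem_compl_iff, Metric.mem_ball, dist_eq_norm, sub_zero, not_lt] at hy
      simpa using hy
    have hy0 : 0 < ‖y‖ := lt_of_lt_of_le one_pos hy1
    have hd : 0 < ‖y‖ ^ (2 + α) := Real.rpow_pos_of_pos hy0 _
    have h1p : 0 < ((1 + ‖y‖) ^ (2 + α) : ℝ) := Real.rpow_pos_of_pos (by linarith) _
    have h2 : ((1 + ‖y‖) ^ (2 + α) : ℝ) ≤ 2 ^ (2+α) * ‖y‖ ^ (2 + α) := by
      rw [← Real.mul_rpow (by norm_num) (norm_nonneg y)]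
      exact Real.rpow_le_rpow (by positivity) (by linarith) (by positivity)
    have hinv : (‖y‖ ^ (2 + α))⁻¹ ≤ 2 ^ (2+α) * ((1 + ‖y‖) ^ (2 + α))⁻¹ := by
      rw [inv_eq_one_div, ← div_eq_mul_inv, div_le_div_iff₀ hd h1p, one_mul]
      exact h2
    calc ‖k y‖ = |num y| / ‖y‖ ^ (2 + α) := by
          rw [hk, Real.norm_eq_abs, abs_div, abs_of_nonneg (Real.rpow_nonneg (norm_nonneg y) _)]
      _ ≤ A / ‖y‖ ^ (2 + α) := div_le_div_of_nonneg_right (hA y) hd.le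
      _ = A * (‖y‖ ^ (2 + α))⁻¹ := by rw [div_eq_mul_inv]
      _ ≤ A * (2 ^ (2+α) * ((1 + ‖y‖) ^ (2 + α))⁻¹) := mul_le_mul_of_nonneg_left hinv hA0
      _ = A * 2 ^ (2+α) * (1 + ‖y‖) ^ (-(2 + α)) := by
          rw [Real.rpow_neg (by positivity)]; ring
  rw [← integrableOn_univ, ← union_compl_self (Metric.ball (0:E2) 1)]
  exact hball.union hcompl


lemma frac_core (α Cα : ℝ) (hCα : 0 < Cα) (f1 f2 : E2 → ℝ) (c : ℝ) (x : E2)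
    (h1 : Integrable (fun y : E2 => (f1 (x + y) + f1 (x - y) - 2 * f1 x) / ‖y‖ ^ (2 + α)))
    (h2 : Integrable (fun y : E2 => (f2 (x + y) + f2 (x - y) - 2 * f2 x) / ‖y‖ ^ (2 + α)))
    (hpt : ∀ y : E2, c * (f2 (x + y) + f2 (x - y) - 2 * f2 x)
      ≤ f1 (x + y) + f1 (x - y) - 2 * f1 x) :
    fracLap α Cα f1 x ≤ c * fracLap α Cα f2 x := by
  have hmono : ∀ y : E2, c * ((f2 (x + y) + f2 (x - y) - 2 * f2 x) / ‖y‖ ^ (2 + α))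
      ≤ (f1 (x + y) + f1 (x - y) - 2 * f1 x) / ‖y‖ ^ (2 + α) := by
    intro y
    rw [← mul_div_assoc]
    exact div_le_div_of_nonneg_right (hpt y) (Real.rpow_nonneg (norm_nonneg y) _)
  have hI : c * (∫ y : E2, (f2 (x + y) + f2 (x - y) - 2 * f2 x) / ‖y‖ ^ (2 + α))
      ≤ ∫ y : E2, (f1 (x + y) + f1 (x - y) - 2 * f1 x) / ‖y‖ ^ (2 + α) := by
    rw [← MeasureTheory.integral_const_mul]
    exact integral_mono (h2.const_mul c) h1 hmono
  unfold fracLap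
  have : c * (-(Cα / 2) * ∫ y : E2, (f2 (x + y) + f2 (x - y) - 2 * f2 x) / ‖y‖ ^ (2 + α))
      = -(Cα / 2) * (c * ∫ y : E2, (f2 (x + y) + f2 (x - y) - 2 * f2 x) / ‖y‖ ^ (2 + α)) := by
    ring
  rw [this]
  exact mul_le_mul_of_nonpos_left hI (by linarith)

lemma main1 (α Cα : ℝ) (hα : 0 < α) (hα2 : α < 2) (hCα : 0 < Cα)
    (g : ℝ → ℝ) (hgc : ConvexOn ℝ Set.univ g) (hg : ContDiff ℝ 2 g)
    (θ : SchwartzMap E2 ℝ) (x : E2) :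
    fracLap α Cα (fun z => g (θ z)) x ≤ deriv g (θ x) * fracLap α Cα (fun z => θ z) x := by
  -- bounds for θ
  obtain ⟨M, hM0, hMd⟩ := θ.decay 0 0
  have hM : ∀ z, |θ z| ≤ M := fun z => by
    simpa [norm_iteratedFDeriv_zero] using hMd z
  have hmem : ∀ z, θ z ∈ Icc (-M) M := fun z => by
    rcases abs_le.mp (hM z) with ⟨h1, h2⟩; exact ⟨h1, h2⟩
  obtain ⟨B1, hB10, hB1d⟩ := θ.decay 0 1
  have hB1 : ∀ z, ‖fderiv ℝ (⇑θ) z‖ ≤ B1 := fun z => by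
    rw [← norm_iteratedFDeriv_zero (𝕜 := ℝ) (f := fderiv ℝ (⇑θ)) (x := z),
      norm_iteratedFDeriv_fderiv (n := 0)]
    simpa using hB1d z
  obtain ⟨B2, hB20, hB2d⟩ := θ.decay 0 2
  have hB2 : ∀ z, ‖fderiv ℝ (fderiv ℝ (⇑θ)) z‖ ≤ B2 := fun z => by
    rw [← norm_iteratedFDeriv_zero (𝕜 := ℝ) (f := fderiv ℝ (fderiv ℝ (⇑θ))) (x := z),
      norm_iteratedFDeriv_fderiv (n := 0), norm_iteratedFDeriv_fderiv (n := 1)]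
    simpa using hB2d z
  have hθd : Differentiable ℝ (⇑θ) := (θ.smooth 1).differentiable one_ne_zero
  have hθd2 : Differentiable ℝ (fderiv ℝ (⇑θ)) :=
    ((θ.smooth 2).fderiv_right (m := 1) (by norm_num)).differentiable one_ne_zero
  have hθlip : ∀ z w : E2, |θ z - θ w| ≤ B1 * ‖z - w‖ := by
    intro z w
    have := Convex.norm_image_sub_le_of_norm_fderiv_le (f := ⇑θ)
      (fun u _ => hθd u) (fun u _ => hB1 u) convex_univ (mem_univ w) (mem_univ z)
    simpa [Real.norm_eq_abs] using this
  have hθlip2 : ∀ z w : E2, ‖fderiv ℝ (⇑θ) z - fderiv ℝ (⇑θ) w‖ ≤ B2 * ‖z - w‖ := by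
    intro z w
    exact Convex.norm_image_sub_le_of_norm_fderiv_le (fun u _ => hθd2 u)
      (fun u _ => hB2 u) convex_univ (mem_univ w) (mem_univ z)
  -- bounds for g on the range of θ
  have hgd : Differentiable ℝ g := hg.differentiable (by norm_num)
  have hg1 : ContDiff ℝ 1 (deriv g) := ((contDiff_succ_iff_deriv (n := 1)).mp hg).2.2
  obtain ⟨K1, hK10, hK1⟩ : ∃ K, 0 ≤ K ∧ ∀ t ∈ Icc (-M) M, |deriv g t| ≤ K := by
    obtain ⟨K, hK⟩ := isCompact_Icc.exists_bound_of_continuousOn (s := Icc (-M) M)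
      (hg.continuous_deriv (by norm_num)).continuousOn
    exact ⟨max K 0, le_max_right _ _, fun t ht => le_trans (hK t ht) (le_max_left _ _)⟩
  obtain ⟨K2, hK20, hK2⟩ : ∃ K, 0 ≤ K ∧ ∀ t ∈ Icc (-M) M, |deriv (deriv g) t| ≤ K := by
    obtain ⟨K, hK⟩ := isCompact_Icc.exists_bound_of_continuousOn (s := Icc (-M) M)
      (hg1.continuous_deriv le_rfl).continuousOn
    exact ⟨max K 0, le_max_right _ _, fun t ht => le_trans (hK t ht) (le_max_left _ _)⟩
  obtain ⟨G, hG0, hG⟩ : ∃ G, 0 ≤ G ∧ ∀ t ∈ Icc (-M) M, |g t| ≤ G := by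
    obtain ⟨K, hK⟩ := isCompact_Icc.exists_bound_of_continuousOn (s := Icc (-M) M)
      hg.continuous.continuousOn
    exact ⟨max K 0, le_max_right _ _, fun t ht => le_trans (hK t ht) (le_max_left _ _)⟩
  -- second-difference bounds for θ
  have sdθ : ∀ y : E2, |θ (x + y) + θ (x - y) - 2 * θ x| ≤ (2 * B2) * ‖y‖ ^ (2:ℝ) := by
    intro y
    rw [rpow_two_eq]
    exact sd_bound hθd hB20.le hθlip2 x y
  have cθ : ∀ y : E2, |θ (x + y) + θ (x - y) - 2 * θ x| ≤ 4 * M := by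
    intro y
    have h3 := abs_add_three (θ (x + y)) (θ (x - y)) (-(2 * θ x))
    rw [abs_neg, abs_mul, abs_two] at h3
    have e : θ (x + y) + θ (x - y) + -(2 * θ x) = θ (x + y) + θ (x - y) - 2 * θ x := by ring
    rw [e] at h3
    have := hM (x + y); have := hM (x - y); have := hM x
    linarith
  -- second-difference bounds for g ∘ θ
  have sdF : ∀ y : E2, |g (θ (x + y)) + g (θ (x - y)) - 2 * g (θ x)|
      ≤ (2 * K2 * B1 ^ 2 + 2 * K1 * B2) * ‖y‖ ^ (2:ℝ) := by
    intro y
    have hya : |θ (x + y) - θ x| ≤ B1 * ‖y‖ := by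
      have := hθlip (x + y) x; rwa [add_sub_cancel_left] at this
    have hyb : |θ (x - y) - θ x| ≤ B1 * ‖y‖ := by
      have := hθlip (x - y) x
      rwa [sub_sub_cancel_left, norm_neg] at this
    have t1 := taylor_bound hg hK2 (hmem (x + y)) (hmem x)
    have t2 := taylor_bound hg hK2 (hmem (x - y)) (hmem x)
    have hsq1 : (θ (x + y) - θ x) ^ 2 ≤ (B1 * ‖y‖) ^ 2 := by
      rw [← sq_abs]; exact pow_le_pow_left₀ (abs_nonneg _) hya 2
    have hsq2 : (θ (x - y) - θ x) ^ 2 ≤ (B1 * ‖y‖) ^ 2 := by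
      rw [← sq_abs]; exact pow_le_pow_left₀ (abs_nonneg _) hyb 2
    have hgc' : |deriv g (θ x)| ≤ K1 := hK1 _ (hmem x)
    have hnum := sdθ y
    have key : g (θ (x + y)) + g (θ (x - y)) - 2 * g (θ x)
        = (g (θ (x + y)) - g (θ x) - deriv g (θ x) * (θ (x + y) - θ x))
          + (g (θ (x - y)) - g (θ x) - deriv g (θ x) * (θ (x - y) - θ x))
          + deriv g (θ x) * (θ (x + y) + θ (x - y) - 2 * θ x) := by ring
    rw [key]
    have h3 := abs_add_three
      (g (θ (x + y)) - g (θ x) - deriv g (θ x) * (θ (x + y) - θ x))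
      (g (θ (x - y)) - g (θ x) - deriv g (θ x) * (θ (x - y) - θ x))
      (deriv g (θ x) * (θ (x + y) + θ (x - y) - 2 * θ x))
    have hmul : |deriv g (θ x) * (θ (x + y) + θ (x - y) - 2 * θ x)|
        ≤ K1 * ((2 * B2) * ‖y‖ ^ (2:ℝ)) := by
      rw [abs_mul]
      exact mul_le_mul hgc' hnum (abs_nonneg _) hK10
    have hy2 : ‖y‖ ^ (2:ℝ) = ‖y‖ ^ (2:ℕ) := rpow_two_eq _
    have hK2a : K2 * (θ (x + y) - θ x) ^ 2 ≤ K2 * (B1 ^ 2 * ‖y‖ ^ (2:ℕ)) := by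
      have : (B1 * ‖y‖) ^ 2 = B1 ^ 2 * ‖y‖ ^ (2:ℕ) := by ring
      exact mul_le_mul_of_nonneg_left (by rw [← this]; exact hsq1) hK20
    have hK2b : K2 * (θ (x - y) - θ x) ^ 2 ≤ K2 * (B1 ^ 2 * ‖y‖ ^ (2:ℕ)) := by
      have : (B1 * ‖y‖) ^ 2 = B1 ^ 2 * ‖y‖ ^ (2:ℕ) := by ring
      exact mul_le_mul_of_nonneg_left (by rw [← this]; exact hsq2) hK20
    rw [hy2] at hmul ⊢
    linarith [t1, t2, h3, hmul, hK2a, hK2b]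
  have cF : ∀ y : E2, |g (θ (x + y)) + g (θ (x - y)) - 2 * g (θ x)| ≤ 4 * G := by
    intro y
    have h3 := abs_add_three (g (θ (x + y))) (g (θ (x - y))) (-(2 * g (θ x)))
    rw [abs_neg, abs_mul, abs_two] at h3
    have e : g (θ (x + y)) + g (θ (x - y)) + -(2 * g (θ x))
        = g (θ (x + y)) + g (θ (x - y)) - 2 * g (θ x) := by ring
    rw [e] at h3
    have := hG _ (hmem (x + y)); have := hG _ (hmem (x - y)); have := hG _ (hmem x)
    linarith
  -- integrability
  have int2 : Integrable (fun y : E2 => (θ (x + y) + θ (x - y) - 2 * θ x) / ‖y‖ ^ (2 + α)) :=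
    integrable_kernel hα hα2 (⇑θ) θ.continuous x (4 * M) (2 * B2) cθ sdθ
  have int1 : Integrable (fun y : E2 =>
      (g (θ (x + y)) + g (θ (x - y)) - 2 * g (θ x)) / ‖y‖ ^ (2 + α)) :=
    integrable_kernel hα hα2 (fun z => g (θ z)) (hg.continuous.comp θ.continuous) x
      (4 * G) (2 * K2 * B1 ^ 2 + 2 * K1 * B2) cF sdF
  -- pointwise convexity inequality
  have hpt : ∀ y : E2, deriv g (θ x) * (θ (x + y) + θ (x - y) - 2 * θ x)
      ≤ g (θ (x + y)) + g (θ (x - y)) - 2 * g (θ x) := by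
    intro y
    have t1 := tangent_le hgc (fun t => hgd t) (θ (x + y)) (θ x)
    have t2 := tangent_le hgc (fun t => hgd t) (θ (x - y)) (θ x)
    have e : deriv g (θ x) * (θ (x + y) + θ (x - y) - 2 * θ x)
        = deriv g (θ x) * (θ (x + y) - θ x) + deriv g (θ x) * (θ (x - y) - θ x) := by ring
    rw [e]
    linarith
  exact frac_core α Cα hCα (fun z => g (θ z)) (fun z => θ z) (deriv g (θ x)) x int1 int2 hpt

/-- Córdoba–Córdoba pointwise inequality `Λ^α(g(θ)) ≤ g'(θ) Λ^α θ` for convex `C²`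
functions `g` and Schwartz `θ`; in particular `Λ^α(θ²) ≤ 2θ Λ^α θ`. -/
theorem stmt12 (α Cα : ℝ) (hα : 0 < α) (hα2 : α < 2) (hCα : 0 < Cα)
    (g : ℝ → ℝ) (hgc : ConvexOn ℝ Set.univ g) (hg : ContDiff ℝ 2 g)
    (θ : SchwartzMap E2 ℝ) :
    (∀ x : E2, fracLap α Cα (fun z => g (θ z)) x ≤ deriv g (θ x) * fracLap α Cα (fun z => θ z) x) ∧
    (∀ x : E2, fracLap α Cα (fun z => θ z ^ 2) x ≤ 2 * θ x * fracLap α Cα (fun z => θ z) x) := by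
  constructor
  · exact fun x => main1 α Cα hα hα2 hCα g hgc hg θ x
  · intro x
    have h := main1 α Cα hα hα2 hCα (fun t : ℝ => t ^ 2) (even_two.convexOn_pow)
      (contDiff_id.pow 2) θ x
    have hder : deriv (fun t : ℝ => t ^ 2) (θ x) = 2 * θ x := by
      simp [deriv_pow]
    rw [hder] at h
    exact h
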